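/- Let H be a real inner product space, S a nonempty finite set, and g : S → H with g(x) ≠ 0 for all x ∈ S. Among all sampling distributions P on S, the variance V[g(X)/(|S|·P(X))] of the importance-weighted estimator (X having law P) is minimized by P*(x) = ‖g(x)‖ / Σ_{x'∈S} ‖g(x')‖, and the minimum value equals ((1/|S|)·Σ_{x∈S} ‖g(x)‖)² − ‖ḡ‖², where ḡ = (1/|S|)·Σ_{x∈S} g(x). -/

import Mathlib

noncomputable def isVar {H : Type*} [NormedAddCommGroup H] [InnerProductSpace ℝ H]
    {S : Type*} [Fintype S] (g : S → H) (P : S → ℝ) : ℝ :=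
  (∑ x, P x * ‖((Fintype.card S : ℝ) * P x)⁻¹ • g x‖ ^ 2)
    - ‖∑ x, P x • (((Fintype.card S : ℝ) * P x)⁻¹ • g x)‖ ^ 2

lemma isVar_eq {H : Type*} [NormedAddCommGroup H] [InnerProductSpace ℝ H]
    {S : Type*} [Fintype S] [Nonempty S] (g : S → H) (P : S → ℝ) (hP : ∀ x, 0 < P x) :
    isVar g P = ((Fintype.card S : ℝ)⁻¹) ^ 2 * (∑ x, ‖g x‖ ^ 2 / P x)
      - ‖((Fintype.card S : ℝ)⁻¹) • ∑ x, g x‖ ^ 2 := by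
  have hn : (0:ℝ) < (Fintype.card S : ℝ) := by positivity
  unfold isVar
  have h2 : (∑ x, P x • (((Fintype.card S : ℝ) * P x)⁻¹ • g x))
      = ((Fintype.card S : ℝ)⁻¹) • ∑ x, g x := by
    rw [Finset.smul_sum]
    refine Finset.sum_congr rfl fun x _ => ?_
    rw [smul_smul, mul_inv, ← mul_assoc, mul_comm (P x), mul_assoc,
      mul_inv_cancel₀ (hP x).ne', mul_one]
  rw [h2]
  congr 1
  rw [Finset.mul_sum]
  refine Finset.sum_congr rfl fun x _ => ?_
  have hPx := (hP x).ne'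
  rw [norm_smul, Real.norm_eq_abs, abs_inv, abs_of_pos (mul_pos hn (hP x))]
  field_simp

theorem optimal_sample_level_selection
    {H : Type*} [NormedAddCommGroup H] [InnerProductSpace ℝ H]
    {S : Type*} [Fintype S] [Nonempty S]
    (g : S → H) (hg : ∀ x, g x ≠ 0)
    (gbar : H) (hgbar : gbar = (Fintype.card S : ℝ)⁻¹ • ∑ x, g x) :
    (∀ P : S → ℝ, (∀ x, 0 < P x) → (∑ x, P x = 1) →
      ((Fintype.card S : ℝ)⁻¹ * ∑ x, ‖g x‖) ^ 2 - ‖gbar‖ ^ 2 ≤ isVar g P) ∧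
    isVar g (fun x => ‖g x‖ / ∑ x', ‖g x'‖)
      = ((Fintype.card S : ℝ)⁻¹ * ∑ x, ‖g x‖) ^ 2 - ‖gbar‖ ^ 2 := by
  have hn : (0:ℝ) < (Fintype.card S : ℝ) := by positivity
  set T : ℝ := ∑ x, ‖g x‖ with hT
  have hTpos : 0 < T := by
    apply Finset.sum_pos (fun x _ => norm_pos_iff.mpr (hg x)) Finset.univ_nonempty
  subst hgbar
  constructor
  · intro P hP hPsum
    rw [isVar_eq g P hP]
    rw [sub_le_sub_iff_right, mul_pow]
    apply mul_le_mul_of_nonneg_left _ (by positivity)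
    -- T^2 ≤ ∑ ‖g x‖²/P x via Cauchy-Schwarz
    have key := Finset.sum_mul_sq_le_sq_mul_sq Finset.univ
      (fun x => Real.sqrt (P x)) (fun x => ‖g x‖ / Real.sqrt (P x))
    have e1 : ∀ x : S, Real.sqrt (P x) * (‖g x‖ / Real.sqrt (P x)) = ‖g x‖ := by
      intro x
      rw [mul_div_cancel₀ _ (Real.sqrt_ne_zero'.mpr (hP x))]
    have e2 : ∀ x : S, Real.sqrt (P x) ^ 2 = P x := fun x => Real.sq_sqrt (hP x).le
    have e3 : ∀ x : S, (‖g x‖ / Real.sqrt (P x)) ^ 2 = ‖g x‖ ^ 2 / P x := by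
      intro x; rw [div_pow, e2]
    simp only [e1, e2, e3] at key
    rw [hPsum, one_mul] at key
    exact key
  · have hPstar : ∀ x : S, 0 < ‖g x‖ / T := fun x => div_pos (norm_pos_iff.mpr (hg x)) hTpos
    rw [isVar_eq g _ hPstar]
    congr 1
    rw [mul_pow]
    congr 1
    have : ∀ x : S, ‖g x‖ ^ 2 / (‖g x‖ / T) = ‖g x‖ * T := by
      intro x
      have := norm_pos_iff.mpr (hg x)
      field_simp
    simp only [this, ← Finset.sum_mul, ← hT]
    ring
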